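/- Let V ∈ ℝ^{d×r} be a matrix with orthonormal columns (V^T V = I_r), let T_k : (ℝ^r)^{⊗k} → ℝ be a symmetric k-tensor, and let H^{(r)}_{e_k} and H^{(d)}_{e_k} denote the degree-k Hermite tensors on ℝ^r and ℝ^d respectively. Define T̃_k on (ℝ^d)^{⊗k} by T̃_k[e_{i₁},…,e_{i_k}] = T_k[V^T e_{i₁},…,V^T e_{i_k}]. Then for every x ∈ ℝ^d, ⟨T_k, H^{(r)}_{e_k}(V^T x)⟩ = ⟨T̃_k, H^{(d)}_{e_k}(x)⟩. -/

import Mathlib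

open Finset Matrix

/-- The entries of the degree-`k` Hermite tensor on `ℝ^n`:
`H_{e_k}(x)|_{i₁,…,i_k} = e^{‖x‖²/2} (−1)^k ∂^k/(∂x_{i₁}⋯∂x_{i_k}) e^{−‖x‖²/2}`. -/
noncomputable def hermiteTensor (n k : ℕ) (x : Fin n → ℝ) (i : Fin k → Fin n) : ℝ :=
  Real.exp ((∑ c, (x c) ^ 2) / 2) * (-1 : ℝ) ^ k *
    iteratedFDeriv ℝ k (fun y : Fin n → ℝ => Real.exp (-(∑ c, (y c) ^ 2) / 2)) x
      (fun l => Pi.single (i l) 1)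

-- shift lemma
lemma iFD_shift {E F : Type*} [NormedAddCommGroup E] [NormedSpace ℝ E]
    [NormedAddCommGroup F] [NormedSpace ℝ F] {f : E → F} (hf : ContDiff ℝ (⊤ : ℕ∞) f) (a : E)
    (n : ℕ) : ∀ x, iteratedFDeriv ℝ n (fun y => f (a + y)) x = iteratedFDeriv ℝ n f (a + x) := by
  induction n with
  | zero => intro x; ext m; simp
  | succ n IH =>
    intro x; ext m
    rw [iteratedFDeriv_succ_apply_left, iteratedFDeriv_succ_apply_left]
    have h1 : iteratedFDeriv ℝ n (fun y => f (a + y)) = fun y => iteratedFDeriv ℝ n f (a + y) :=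
      funext IH
    rw [h1]
    have hdiff : DifferentiableAt ℝ (iteratedFDeriv ℝ n f) (a + x) :=
      (hf.differentiable_iteratedFDeriv (ENat.natCast_lt_of_coe_top_le_withTop le_rfl n)).differentiableAt
    have hcomp : HasFDerivAt (fun y => iteratedFDeriv ℝ n f (a + y))
        (fderiv ℝ (iteratedFDeriv ℝ n f) (a + x)) x := by
      have := hdiff.hasFDerivAt.comp x ((hasFDerivAt_id x).const_add a)
      simpa [Function.comp_def] using this
    rw [hcomp.fderiv]

lemma gauss_smooth (n : ℕ) :
    ContDiff ℝ (⊤ : ℕ∞) (fun y : Fin n → ℝ => Real.exp (-(∑ c, (y c) ^ 2) / 2)) := by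
  apply Real.contDiff_exp.comp
  apply ContDiff.div_const
  apply ContDiff.neg
  apply ContDiff.sum
  intro c _
  exact (contDiff_apply ℝ ℝ c).pow 2

lemma sum_add_sq {m : ℕ} (a b : Fin m → ℝ) :
    ∑ c, (a c + b c) ^ 2 = ∑ c, (a c) ^ 2 + 2 * (a ⬝ᵥ b) + ∑ c, (b c) ^ 2 := by
  have h : ∀ c, (a c + b c) ^ 2 = a c ^ 2 + 2 * (a c * b c) + b c ^ 2 := fun c => by ring
  rw [Finset.sum_congr rfl fun c _ => h c, Finset.sum_add_distrib, Finset.sum_add_distrib,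
    ← Finset.mul_sum]
  rfl

lemma sum_sq_eq_dot {m : ℕ} (a : Fin m → ℝ) : ∑ c, (a c) ^ 2 = a ⬝ᵥ a := by
  simp [dotProduct, sq]

lemma key_lemma (d r k : ℕ) (V : Matrix (Fin d) (Fin r) ℝ) (hV : Vᵀ * V = 1)
    (x : Fin d → ℝ) (u : Fin k → (Fin r → ℝ)) :
    Real.exp ((∑ c, ((Vᵀ.mulVec x) c) ^ 2) / 2) *
      iteratedFDeriv ℝ k (fun y : Fin r → ℝ => Real.exp (-(∑ c, (y c) ^ 2) / 2)) (Vᵀ.mulVec x) u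
    = Real.exp ((∑ c, (x c) ^ 2) / 2) *
      iteratedFDeriv ℝ k (fun y : Fin d → ℝ => Real.exp (-(∑ c, (y c) ^ 2) / 2)) x
        (fun l => V.mulVec (u l)) := by
  set fd : (Fin d → ℝ) → ℝ := fun y => Real.exp (-(∑ c, (y c) ^ 2) / 2) with hfd
  set fr : (Fin r → ℝ) → ℝ := fun y => Real.exp (-(∑ c, (y c) ^ 2) / 2) with hfr
  set L : (Fin r → ℝ) →L[ℝ] (Fin d → ℝ) := LinearMap.toContinuousLinearMap (Matrix.mulVecLin V)
    with hLdef
  have hL : ∀ t, L t = V.mulVec t := fun t => rfl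
  set C : ℝ := Real.exp (-(∑ c, (x c) ^ 2) / 2 + (∑ c, ((Vᵀ.mulVec x) c) ^ 2) / 2) with hC
  -- dot product identities
  have hB : ∀ t : Fin r → ℝ, (V.mulVec t) ⬝ᵥ (V.mulVec t) = t ⬝ᵥ t := by
    intro t
    rw [Matrix.dotProduct_mulVec, ← Matrix.mulVec_transpose, Matrix.mulVec_mulVec, hV,
      Matrix.one_mulVec]
  have hA : ∀ t : Fin r → ℝ, x ⬝ᵥ (V.mulVec t) = (Vᵀ.mulVec x) ⬝ᵥ t := by
    intro t
    rw [Matrix.dotProduct_mulVec, ← Matrix.mulVec_transpose]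
  -- pointwise identity
  have hfun : ∀ t : Fin r → ℝ, fd (x + V.mulVec t) = C * fr (Vᵀ.mulVec x + t) := by
    intro t
    rw [hfd, hfr, hC]
    simp only [Pi.add_apply]
    rw [← Real.exp_add]
    congr 1
    rw [sum_add_sq, sum_add_sq, hA, sum_sq_eq_dot (V.mulVec t), hB, sum_sq_eq_dot t]
    ring
  -- step 1
  have hsm : ContDiff ℝ (⊤ : ℕ∞) (fun y => fd (x + y)) :=
    (gauss_smooth d).comp (contDiff_const.add contDiff_id)
  have step1 : iteratedFDeriv ℝ k (fun t => fd (x + V.mulVec t)) 0 u =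
      iteratedFDeriv ℝ k fd x (fun l => V.mulVec (u l)) := by
    have h1 : (fun t => fd (x + V.mulVec t)) = (fun y => fd (x + y)) ∘ L := rfl
    rw [h1, ContinuousLinearMap.iteratedFDeriv_comp_right L hsm 0 (ENat.natCast_lt_of_coe_top_le_withTop le_rfl k).le]
    rw [ContinuousMultilinearMap.compContinuousLinearMap_apply]
    rw [map_zero L, iFD_shift (gauss_smooth d) x k 0]
    simp [hL]
    rfl
  -- step 2
  have step2 : iteratedFDeriv ℝ k (fun t => fd (x + V.mulVec t)) 0 u =
      C * iteratedFDeriv ℝ k fr (Vᵀ.mulVec x) u := by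
    have h2 : (fun t => fd (x + V.mulVec t)) = fun t => C • fr (Vᵀ.mulVec x + t) := by
      funext t; rw [hfun t]; rfl
    rw [h2]
    have hsm2 : ContDiff ℝ (k : ℕ∞) (fun t => fr (Vᵀ.mulVec x + t)) :=
      ((gauss_smooth r).comp (contDiff_const.add contDiff_id)).of_le (by exact_mod_cast le_top)
    rw [iteratedFDeriv_const_smul_apply' hsm2.contDiffAt]
    rw [ContinuousMultilinearMap.smul_apply, smul_eq_mul]
    congr 1
    have := iFD_shift (gauss_smooth r) (Vᵀ.mulVec x) k 0
    rw [this]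
    simp
    rfl
  rw [← step1, step2, ← mul_assoc]
  congr 1
  rw [hC, ← Real.exp_add]
  congr 1
  ring

lemma expand_lemma (d r k : ℕ) (V : Matrix (Fin d) (Fin r) ℝ)
    (W : ContinuousMultilinearMap ℝ (fun _ : Fin k => (Fin d → ℝ)) ℝ) (i : Fin k → Fin r) :
    W (fun l => V.mulVec (Pi.single (i l) 1)) =
      ∑ j : Fin k → Fin d, (∏ l, V (j l) (i l)) * W (fun l => Pi.single (j l) 1) := by
  have h1 : ∀ l : Fin k, V.mulVec (Pi.single (i l) 1) =
      ∑ j : Fin d, V j (i l) • (Pi.single j 1 : Fin d → ℝ) := by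
    intro l
    funext j'
    simp [Matrix.mulVec_single, Finset.sum_apply, Pi.single_apply]
  rw [show (fun l => V.mulVec (Pi.single (i l) 1)) =
      (fun l => ∑ j : Fin d, V j (i l) • (Pi.single j 1 : Fin d → ℝ)) from funext h1]
  rw [show W (fun l => ∑ j : Fin d, V j (i l) • (Pi.single j 1 : Fin d → ℝ)) =
      W.toMultilinearMap (fun l => ∑ j : Fin d, V j (i l) • (Pi.single j 1 : Fin d → ℝ)) from rfl]
  rw [W.toMultilinearMap.map_sum (fun l j => V j (i l) • (Pi.single j 1 : Fin d → ℝ))]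
  apply Finset.sum_congr rfl
  intro j _
  rw [W.toMultilinearMap.map_smul_univ (fun l => V (j l) (i l)) (fun l => (Pi.single (j l) 1 : Fin d → ℝ))]
  simp [smul_eq_mul]

/-- For an orthonormal `V ∈ ℝ^{d×r}` and a symmetric `k`-tensor `T` on `ℝ^r`, with
`T̃(j) = T(Vᵀ e_{j₁}, …, Vᵀ e_{j_k})`, one has
`⟨T, H^{(r)}_{e_k}(Vᵀ x)⟩ = ⟨T̃, H^{(d)}_{e_k}(x)⟩` for all `x`. -/
theorem stmt18 (d r k : ℕ) (V : Matrix (Fin d) (Fin r) ℝ) (hV : Vᵀ * V = 1)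
    (T : (Fin k → Fin r) → ℝ)
    (hsym : ∀ (τ : Equiv.Perm (Fin k)) (i : Fin k → Fin r), T (i ∘ τ) = T i)
    (x : Fin d → ℝ) :
    ∑ i : Fin k → Fin r, T i * hermiteTensor r k (Vᵀ.mulVec x) i =
      ∑ j : Fin k → Fin d,
        (∑ i : Fin k → Fin r, T i * ∏ l, V (j l) (i l)) * hermiteTensor d k x j := by
  have main : ∀ i : Fin k → Fin r, hermiteTensor r k (Vᵀ.mulVec x) i =
      ∑ j : Fin k → Fin d, (∏ l, V (j l) (i l)) * hermiteTensor d k x j := by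
    intro i
    unfold hermiteTensor
    have e1 : ∀ (a b c : ℝ), a * b * c = b * (a * c) := by intros; ring
    rw [e1, key_lemma d r k V hV x (fun l => Pi.single (i l) 1), expand_lemma d r k V _ i,
      Finset.mul_sum, Finset.mul_sum]
    apply Finset.sum_congr rfl
    intro j _
    ring
  calc ∑ i : Fin k → Fin r, T i * hermiteTensor r k (Vᵀ.mulVec x) i
      = ∑ i : Fin k → Fin r, ∑ j : Fin k → Fin d,
          T i * ((∏ l, V (j l) (i l)) * hermiteTensor d k x j) := by
        apply Finset.sum_congr rfl
        intro i _
        rw [main i, Finset.mul_sum]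
    _ = ∑ j : Fin k → Fin d, ∑ i : Fin k → Fin r,
          T i * ((∏ l, V (j l) (i l)) * hermiteTensor d k x j) := Finset.sum_comm
    _ = _ := by
        apply Finset.sum_congr rfl
        intro j _
        rw [Finset.sum_mul]
        apply Finset.sum_congr rfl
        intro i _
        ring
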